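/- For an undirected graph G = (V,E) with Laplacian L, every eigenvalue lambda of L satisfies lambda <= max over edges (i,j) in E of (d_i + d_j), where d_i denotes the degree of vertex i. -/
import Mathlib


open Matrix

/-- Anderson–Morley bound: every eigenvalue `lam` of the Laplacian of a graph
with at least one edge satisfies `lam ≤ max_{(i,j) ∈ E} (d_i + d_j)`,
i.e. there is an edge `(i,j)` with `lam ≤ d_i + d_j`. -/
theorem anderson_morley_bound {n : ℕ} (G : SimpleGraph (Fin n))
    [DecidableRel G.Adj] (hE : ∃ i j, G.Adj i j)
    (lam : ℝ) (v : Fin n → ℝ) (hv : v ≠ 0)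
    (heig : G.lapMatrix ℝ *ᵥ v = lam • v) :
    ∃ i j, G.Adj i j ∧ lam ≤ (G.degree i : ℝ) + (G.degree j : ℝ) := by
  by_cases hlam : lam ≤ 0
  · obtain ⟨i, j, hij⟩ := hE
    exact ⟨i, j, hij, hlam.trans (by positivity)⟩
  push_neg at hlam
  -- pick i₀ maximizing |v i|
  have hne : (Finset.univ : Finset (Fin n)).Nonempty := by
    obtain ⟨i, _, _⟩ := hE; exact ⟨i, Finset.mem_univ i⟩
  obtain ⟨i₀, -, hi₀⟩ := Finset.exists_max_image Finset.univ (fun i => |v i|) hne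
  have hvi₀ : 0 < |v i₀| := by
    rcases eq_or_lt_of_le (abs_nonneg (v i₀)) with h | h
    · exfalso; apply hv; funext k
      have := hi₀ k (Finset.mem_univ k)
      have : |v k| ≤ 0 := by linarith [abs_nonneg (v i₀)]
      simpa using le_antisymm this (abs_nonneg _)
    · exact h
  -- normalize sign
  set s : ℝ := if 0 < v i₀ then 1 else -1 with hs
  set w : Fin n → ℝ := s • v with hw
  have hwi₀ : w i₀ = |v i₀| := by
    by_cases h : 0 < v i₀
    · simp [hw, hs, h, abs_of_pos h]
    · have : v i₀ < 0 := by
        rcases lt_trichotomy (v i₀) 0 with h1 | h1 | h1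
        · exact h1
        · exfalso; rw [h1] at hvi₀; simp at hvi₀
        · exact absurd h1 h
      simp [hw, hs, h, abs_of_neg this]
  have hwmax : ∀ k, w k ≤ w i₀ := by
    intro k
    have h1 : |w k| = |v k| := by
      by_cases h : 0 < v i₀ <;> simp [hw, hs, h, abs_mul]
    calc w k ≤ |w k| := le_abs_self _
      _ = |v k| := h1
      _ ≤ |v i₀| := hi₀ k (Finset.mem_univ k)
      _ = w i₀ := hwi₀.symm
  have hwi₀pos : 0 < w i₀ := by rw [hwi₀]; exact hvi₀
  -- w is an eigenvector
  have heq : ∀ i : Fin n,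
      (G.degree i : ℝ) * w i - ∑ u ∈ G.neighborFinset i, w u = lam * w i := by
    intro i
    have h1 : (G.lapMatrix ℝ *ᵥ w) i = lam * w i := by
      rw [hw, mulVec_smul, heig]
      simp only [Pi.smul_apply, smul_eq_mul]
      ring
    rw [← h1, SimpleGraph.lapMatrix_mulVec_apply]
  -- i₀ has a neighbor
  have hnbr : (G.neighborFinset i₀).Nonempty := by
    by_contra h
    rw [Finset.not_nonempty_iff_eq_empty] at h
    have hd : G.degree i₀ = 0 := by rw [← SimpleGraph.card_neighborFinset_eq_degree, h]; simp
    have := heq i₀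
    rw [hd, h] at this
    simp at this
    rcases this with h' | h'
    · exact absurd h' (ne_of_gt hlam)
    · exact absurd h' (ne_of_gt hwi₀pos)
  obtain ⟨j₀, hj₀mem, hj₀⟩ := Finset.exists_min_image (G.neighborFinset i₀) w hnbr
  have hadj : G.Adj i₀ j₀ := by rwa [← SimpleGraph.mem_neighborFinset]
  refine ⟨i₀, j₀, hadj, ?_⟩
  -- key inequalities
  have hsum1 : (G.degree i₀ : ℝ) * w j₀ ≤ ∑ u ∈ G.neighborFinset i₀, w u := by
    rw [← SimpleGraph.card_neighborFinset_eq_degree]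
    calc ((G.neighborFinset i₀).card : ℝ) * w j₀
        = ∑ _u ∈ G.neighborFinset i₀, w j₀ := by rw [Finset.sum_const, nsmul_eq_mul]
      _ ≤ ∑ u ∈ G.neighborFinset i₀, w u := Finset.sum_le_sum (fun u hu => hj₀ u hu)
  have hsum2 : ∑ u ∈ G.neighborFinset j₀, w u ≤ (G.degree j₀ : ℝ) * w i₀ := by
    rw [← SimpleGraph.card_neighborFinset_eq_degree]
    calc ∑ u ∈ G.neighborFinset j₀, w u
        ≤ ∑ _u ∈ G.neighborFinset j₀, w i₀ := Finset.sum_le_sum (fun u _ => hwmax u)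
      _ = ((G.neighborFinset j₀).card : ℝ) * w i₀ := by rw [Finset.sum_const, nsmul_eq_mul]
  have h1 : lam * w i₀ ≤ (G.degree i₀ : ℝ) * (w i₀ - w j₀) := by
    have := heq i₀
    nlinarith [hsum1]
  have h2 : -(lam * w j₀) ≤ (G.degree j₀ : ℝ) * (w i₀ - w j₀) := by
    have := heq j₀
    nlinarith [hsum2]
  have hdiff : w j₀ ≤ w i₀ := hwmax j₀
  rcases eq_or_lt_of_le hdiff with h | h
  · -- w j₀ = w i₀ : contradiction with lam > 0
    exfalso
    nlinarith [h1, h, hlam, hwi₀pos]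
  · have hsum : lam * (w i₀ - w j₀) ≤ ((G.degree i₀ : ℝ) + G.degree j₀) * (w i₀ - w j₀) := by
      nlinarith
    have hpos : 0 < w i₀ - w j₀ := by linarith
    exact le_of_mul_le_mul_right (by linarith [hsum]) hpos
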